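/- (Exact penalty with explicit threshold.) Let p : ℝⁿ → ℝ be concave and continuous with p(x) ≥ 0 for all x ∈ K and with {x ∈ K : p(x) ≤ 0} = S. Let V(K) denote the set of extreme points of K, assume E := {x ∈ V(K) : p(x) > 0} is nonempty and finite, and set m := min{p(x) : x ∈ E}, α₀ := min{⟨c,x⟩ : x ∈ K}, and t₀ := (min{⟨c,x⟩ : x ∈ S} − α₀)/m. Then for every t > t₀, the set of global optimal solutions of min{⟨c,x⟩ : x ∈ S} equals the set of global optimal solutions of min{⟨c,x⟩ + t·p(x) : x ∈ K}. -/

import Mathlib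

theorem stmt_8 (m n : ℕ) (A : Matrix (Fin m) (Fin n) ℝ) (b : Fin m → ℝ) (c : Fin n → ℝ)
    (p : (Fin n → ℝ) → ℝ)
    (K S E : Set (Fin n → ℝ))
    (hK : K = {x | (∀ i, 0 ≤ x i ∧ x i ≤ 1) ∧ A.mulVec x = b})
    (hS : S = {x ∈ K | ∀ i, x i = 0 ∨ x i = 1})
    (hSne : S.Nonempty)
    (hpconc : ConcaveOn ℝ Set.univ p)
    (hpcont : Continuous p)
    (hpnonneg : ∀ x ∈ K, 0 ≤ p x)
    (hpS : {x ∈ K | p x ≤ 0} = S)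
    (hE : E = {x ∈ Set.extremePoints ℝ K | 0 < p x})
    (hEne : E.Nonempty) (hEfin : E.Finite)
    (pmin α₀ t₀ : ℝ)
    (hpmin : pmin = sInf (p '' E))
    (hα₀ : α₀ = sInf ((fun x => ∑ i, c i * x i) '' K))
    (ht₀ : t₀ = (sInf ((fun x => ∑ i, c i * x i) '' S) - α₀) / pmin) :
    ∀ t > t₀,
      {x ∈ S | ∀ y ∈ S, ∑ i, c i * x i ≤ ∑ i, c i * y i} =
      {x ∈ K | ∀ y ∈ K, (∑ i, c i * x i) + t * p x ≤ (∑ i, c i * y i) + t * p y} := by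
  set f : (Fin n → ℝ) → ℝ := fun x => ∑ i, c i * x i with hf
  -- basic facts
  have hSK : S ⊆ K := by rw [hS]; exact Set.sep_subset _ _
  have hKconv : Convex ℝ K := by
    rw [hK]
    intro x hx y hy a b' ha hb hab
    refine ⟨fun i => ?_, ?_⟩
    · constructor
      · have := (hx.1 i).1; have := (hy.1 i).1
        simp only [Pi.add_apply, Pi.smul_apply, smul_eq_mul]
        nlinarith
      · have := (hx.1 i).2; have := (hy.1 i).2
        simp only [Pi.add_apply, Pi.smul_apply, smul_eq_mul]
        nlinarith
    · rw [Matrix.mulVec_add, Matrix.mulVec_smul, Matrix.mulVec_smul, hx.2, hy.2,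
        ← add_smul, hab, one_smul]
  have hfcont : Continuous f := by
    apply continuous_finset_sum
    exact fun i _ => continuous_const.mul (continuous_apply i)
  have hKclosed : IsClosed K := by
    rw [hK]
    have : {x : Fin n → ℝ | (∀ i, 0 ≤ x i ∧ x i ≤ 1) ∧ A.mulVec x = b} =
        (⋂ i, {x : Fin n → ℝ | 0 ≤ x i ∧ x i ≤ 1}) ∩ {x | A.mulVec x = b} := by
      ext x; simp [Set.mem_iInter]
    rw [this]
    refine IsClosed.inter (isClosed_iInter fun i => ?_) ?_
    · exact (isClosed_le continuous_const (continuous_apply i)).inter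
        (isClosed_le (continuous_apply i) continuous_const)
    · have hc : Continuous fun x : Fin n → ℝ => A.mulVec x := by
        refine continuous_pi fun j => ?_
        simp only [Matrix.mulVec, dotProduct]
        exact continuous_finset_sum _ fun k _ => continuous_const.mul (continuous_apply k)
      exact isClosed_eq hc continuous_const
  have hKcomp : IsCompact K := by
    refine (isCompact_Icc (a := (0 : Fin n → ℝ)) (b := 1)).of_isClosed_subset hKclosed ?_
    intro x hx
    rw [hK] at hx
    exact ⟨fun i => (hx.1 i).1, fun i => (hx.1 i).2⟩
  -- S is a set of extreme points
  have hSext : S ⊆ Set.extremePoints ℝ K := by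
    intro x hx
    rw [hS] at hx
    refine mem_extremePoints.2 ⟨hx.1, fun y hy z hz hseg => ?_⟩
    obtain ⟨a, b', ha, hb, hab, hxyz⟩ := hseg
    rw [hK] at hy hz
    have key : ∀ i, y i = x i ∧ z i = x i := by
      intro i
      have h1 : a * y i + b' * z i = x i := by
        have := congrFun hxyz i
        simpa using this
      have hy1 := (hy.1 i).1; have hy2 := (hy.1 i).2
      have hz1 := (hz.1 i).1; have hz2 := (hz.1 i).2
      rcases hx.2 i with h0 | h0 <;> rw [h0] at h1 ⊢ <;> constructor <;> nlinarith
    exact ⟨funext fun i => (key i).1, funext fun i => (key i).2⟩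
  -- extreme points split into S and E
  have hextSE : Set.extremePoints ℝ K ⊆ S ∪ E := by
    intro v hv
    by_cases hpv : p v ≤ 0
    · left; rw [← hpS]; exact ⟨hv.1, hpv⟩
    · right; rw [hE]; exact ⟨hv, lt_of_not_ge hpv⟩
  have hEK : E ⊆ K := by rw [hE]; exact fun x hx => hx.1.1
  -- K is the convex hull of its extreme points
  have hSfin : S.Finite := by
    have : S ⊆ Set.pi Set.univ fun _ : Fin n => ({0, 1} : Set ℝ) := by
      intro x hx i _
      rw [hS] at hx
      exact hx.2 i
    exact Set.Finite.subset (Set.Finite.pi fun i => (Set.finite_singleton (1:ℝ)).insert 0) this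
  have hextfin : (Set.extremePoints ℝ K).Finite :=
    (hSfin.union hEfin).subset hextSE
  have hhull : K = convexHull ℝ (Set.extremePoints ℝ K) := by
    have h1 := closure_convexHull_extremePoints hKcomp hKconv
    rw [← (hextfin.isCompact_convexHull ℝ).isClosed.closure_eq, h1]
  -- pmin facts
  have hppos : ∀ v ∈ E, 0 < p v := by rw [hE]; exact fun v hv => hv.2
  have hpminpos : 0 < pmin := by
    rw [hpmin]
    have hmem : sInf (p '' E) ∈ p '' E :=
      (hEne.image p).csInf_mem (hEfin.image p)
    obtain ⟨v, hv, hveq⟩ := hmem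
    rw [← hveq]; exact hppos v hv
  have hpminle : ∀ v ∈ E, pmin ≤ p v := by
    intro v hv
    rw [hpmin]
    exact csInf_le (hEfin.image p).bddBelow ⟨v, hv, rfl⟩
  -- α₀ facts
  have hfKbdd : BddBelow (f '' K) := (hKcomp.image hfcont).bddBelow
  have hα₀le : ∀ x ∈ K, α₀ ≤ f x := by
    intro x hx
    rw [hα₀]
    exact csInf_le hfKbdd ⟨x, hx, rfl⟩
  -- β facts
  set β : ℝ := sInf (f '' S) with hβ
  have hβmem : ∃ s₀ ∈ S, f s₀ = β := by
    have : β ∈ f '' S := (hSne.image f).csInf_mem (hSfin.image f)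
    obtain ⟨s₀, hs₀, h⟩ := this
    exact ⟨s₀, hs₀, h⟩
  have hβle : ∀ x ∈ S, β ≤ f x := fun x hx =>
    csInf_le (hSfin.image f).bddBelow ⟨x, hx, rfl⟩
  have hαβ : α₀ ≤ β := by
    rw [hα₀, hβ]
    exact csInf_le_csInf hfKbdd (hSne.image f) (Set.image_mono hSK)
  have ht₀pmin : t₀ * pmin = β - α₀ := by
    rw [ht₀, div_mul_cancel₀ _ (ne_of_gt hpminpos)]
  have ht₀nonneg : 0 ≤ t₀ := by
    rw [ht₀]
    exact div_nonneg (by linarith) hpminpos.le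
  -- p vanishes on S
  have hpS0 : ∀ x ∈ S, p x = 0 := by
    intro x hx
    rw [← hpS] at hx
    exact le_antisymm hx.2 (hpnonneg x hx.1)
  -- concavity of penalized objective
  have hfconc : ∀ s : ℝ, 0 ≤ s → ConcaveOn ℝ Set.univ (fun x => f x + s * p x) := by
    intro s hs
    have hflin : ConcaveOn ℝ Set.univ f := by
      refine ⟨convex_univ, fun x _ y _ a b' ha hb hab => ?_⟩
      apply le_of_eq
      simp only [hf, smul_eq_mul, Finset.mul_sum, ← Finset.sum_add_distrib]
      refine Finset.sum_congr rfl fun i _ => ?_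
      simp [Pi.add_apply, Pi.smul_apply, smul_eq_mul]
      ring
    have hsp : ConcaveOn ℝ Set.univ (fun x => s * p x) := by
      have := hpconc.smul hs
      simpa [smul_eq_mul] using this
    exact hflin.add hsp
  -- key lemma
  have key : ∀ s : ℝ, 0 ≤ s → β ≤ α₀ + s * pmin → ∀ y ∈ K, β ≤ f y + s * p y := by
    intro s hs hβs y hy
    have hy' : y ∈ convexHull ℝ (Set.extremePoints ℝ K) := hhull ▸ hy
    obtain ⟨v, hv, hvle⟩ := (hfconc s hs).exists_le_of_mem_convexHull
      (Set.subset_univ _) hy'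
    refine le_trans ?_ hvle
    rcases hextSE hv with hvS | hvE
    · have := hβle v hvS
      rw [hpS0 v hvS]
      linarith
    · have h1 := hα₀le v (hEK hvE)
      have h2 := hpminle v hvE
      nlinarith
  intro t ht
  have htt₀ : t₀ < t := ht
  have htpos : 0 < t := lt_of_le_of_lt ht₀nonneg htt₀
  have keyt : ∀ y ∈ K, β ≤ f y + t * p y := by
    refine key t htpos.le ?_
    nlinarith
  have keyt₀ : ∀ y ∈ K, β ≤ f y + t₀ * p y := by
    refine key t₀ ht₀nonneg ?_
    linarith
  obtain ⟨s₀, hs₀S, hs₀β⟩ := hβmem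
  ext x
  simp only [Set.mem_setOf_eq]
  constructor
  · rintro ⟨hxS, hxopt⟩
    have hxK := hSK hxS
    have hfx : f x = β := le_antisymm (hs₀β ▸ hxopt s₀ hs₀S) (hβle x hxS)
    refine ⟨hxK, fun y hy => ?_⟩
    have := keyt y hy
    rw [show (∑ i, c i * x i) = f x from rfl, hfx, hpS0 x hxS]
    simpa using this
  · rintro ⟨hxK, hxopt⟩
    have hgle : f x + t * p x ≤ β := by
      have := hxopt s₀ (hSK hs₀S)
      rw [show (∑ i, c i * s₀ i) = f s₀ from rfl, hs₀β, hpS0 s₀ hs₀S] at this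
      simpa using this
    have hgeq : f x + t * p x = β := le_antisymm hgle (keyt x hxK)
    have hpx0 : p x = 0 := by
      have h1 := keyt₀ x hxK
      have h2 := hpnonneg x hxK
      nlinarith
    have hxS : x ∈ S := by
      rw [← hpS]; exact ⟨hxK, hpx0.le⟩
    have hfx : f x = β := by rw [hpx0] at hgeq; linarith
    exact ⟨hxS, fun y hyS => by
      rw [show (∑ i, c i * x i) = f x from rfl, hfx]
      exact hβle y hyS⟩
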